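/- Let ℓ ≥ 2, q = 2^ℓ, let r be an integer with 1 ≤ r ≤ q/4, and set s = ⌈log₂ r⌉. Then |S*(ℓ; r)| < 4r² · |S_0(ℓ − s; 3)|. Moreover, if r is a power of 2 (so that s = log₂ r), then |S*(ℓ; r)| ≤ r² · |S_0(ℓ − s; 3)|. -/

import Mathlib

/-- `u ≤₂ v`: every binary digit of `u` is at most the corresponding binary digit
of `v` (the 2-shadow relation). -/
def le2 (u v : ℕ) : Prop := ∀ k, u.testBit k = true → v.testBit k = true

/-- The set `S_t(ℓ; r)` of pairs `(a, b)` with `0 ≤ a, b ≤ 2^ℓ − 1` for which there exist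
`i ≤₂ b`, `j ≤₂ (b − i)` and `1 ≤ r' ≤ r` with `2i + j + a = (t+1)·2^ℓ − r'`. -/
def Sset (ℓ r t : ℕ) : Set (ℕ × ℕ) :=
  {p | p.1 ≤ 2 ^ ℓ - 1 ∧ p.2 ≤ 2 ^ ℓ - 1 ∧
    ∃ i j r' : ℕ, le2 i p.2 ∧ le2 j (p.2 - i) ∧ 1 ≤ r' ∧ r' ≤ r ∧
      2 * i + j + p.1 = (t + 1) * 2 ^ ℓ - r'}

/-- The set `S*(ℓ; r)` of pairs `(a, b)` with `0 ≤ a, b ≤ 2^ℓ − 1` for which there exist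
`i ≤₂ b`, `j ≤₂ (b − i)`, `t ≥ 0` and `1 ≤ r' ≤ r` with
`2i + j + a = 2^ℓ − r' + t·(2^ℓ − 1)`. -/
def SstarSet (ℓ r : ℕ) : Set (ℕ × ℕ) :=
  {p | p.1 ≤ 2 ^ ℓ - 1 ∧ p.2 ≤ 2 ^ ℓ - 1 ∧
    ∃ i j t r' : ℕ, le2 i p.2 ∧ le2 j (p.2 - i) ∧ 1 ≤ r' ∧ r' ≤ r ∧
      2 * i + j + p.1 = 2 ^ ℓ - r' + t * (2 ^ ℓ - 1)}

namespace Stmt14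

lemma le2_zero (v : ℕ) : le2 0 v := by
  intro k hk
  rw [Nat.zero_testBit] at hk
  exact absurd hk (by simp)

lemma le2_le {u v : ℕ} (h : le2 u v) : u ≤ v := by
  have hand : u &&& v = u := by
    apply Nat.eq_of_testBit_eq
    intro k
    rw [Nat.testBit_land]
    cases hu : u.testBit k
    · simp
    · simp [h k hu]
  calc u = u &&& v := hand.symm
    _ ≤ v := Nat.and_le_right

lemma testBit_false_of_lt {u ℓ k : ℕ} (hu : u < 2 ^ ℓ) (hk : ℓ ≤ k) :
    u.testBit k = false :=
  Nat.testBit_lt_two_pow (lt_of_lt_of_le hu (Nat.pow_le_pow_right (by norm_num) hk))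

lemma testBit_true_lt {u ℓ k : ℕ} (hu : u < 2 ^ ℓ) (h : u.testBit k = true) : k < ℓ := by
  by_contra hc
  push_neg at hc
  rw [testBit_false_of_lt hu hc] at h
  exact absurd h (by simp)

lemma testBit_mod_lt {x ℓ k : ℕ} (hk : k < ℓ) : (x % 2 ^ ℓ).testBit k = x.testBit k := by
  rw [Nat.testBit_mod_two_pow]
  simp [hk]

lemma testBit_add_pow {x ℓ k : ℕ} (hx : x < 2 ^ ℓ) (hk : k < ℓ) :
    (x + 2 ^ ℓ).testBit k = x.testBit k := by
  rw [← testBit_mod_lt hk (x := x + 2 ^ ℓ), Nat.add_mod_right, Nat.mod_eq_of_lt hx]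

lemma lt_pow_of_testBit_false {u ℓ : ℕ} (hu : u < 2 ^ (ℓ + 1)) (h : u.testBit ℓ = false) :
    u < 2 ^ ℓ := by
  by_contra hc
  push_neg at hc
  have h1 : u / 2 ^ ℓ = 1 := by
    apply Nat.div_eq_of_lt_le
    · simpa using hc
    · rw [pow_succ] at hu; omega
  rw [Nat.testBit_eq_decide_div_mod_eq, h1] at h
  simp at h

lemma le2_mod {u v : ℕ} (s : ℕ) (h : le2 u v) : le2 (u % 2 ^ s) (v % 2 ^ s) := by
  intro k hk
  rw [Nat.testBit_mod_two_pow] at hk ⊢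
  simp only [Bool.and_eq_true, decide_eq_true_eq] at hk ⊢
  exact ⟨hk.1, h k hk.2⟩

lemma le2_div {u v : ℕ} (s : ℕ) (h : le2 u v) : le2 (u / 2 ^ s) (v / 2 ^ s) := by
  intro k hk
  rw [← Nat.shiftRight_eq_div_pow, Nat.testBit_shiftRight] at hk ⊢
  exact h _ hk

lemma sub_decomp {u v : ℕ} (s : ℕ) (h : le2 u v) :
    (v - u) / 2 ^ s = v / 2 ^ s - u / 2 ^ s ∧
    (v - u) % 2 ^ s = v % 2 ^ s - u % 2 ^ s := by
  set S := 2 ^ s with hS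
  have hSpos : 0 < S := Nat.two_pow_pos s
  have hl : u % S ≤ v % S := le2_le (le2_mod s h)
  have hh : u / S ≤ v / S := le2_le (le2_div s h)
  have hv : S * (v / S) + v % S = v := Nat.div_add_mod v S
  have hu : S * (u / S) + u % S = u := Nat.div_add_mod u S
  have hmul : S * (v / S - u / S) + S * (u / S) = S * (v / S) := by
    rw [← Nat.mul_add]
    congr 1
    omega
  have key : v - u = S * (v / S - u / S) + (v % S - u % S) := by omega
  have hlt : v % S - u % S < S := lt_of_le_of_lt (Nat.sub_le _ _) (Nat.mod_lt _ hSpos)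
  constructor
  · rw [key, Nat.mul_add_div hSpos, Nat.div_eq_of_lt hlt, Nat.add_zero]
  · rw [key, Nat.mul_add_mod, Nat.mod_eq_of_lt hlt]

/-- Descent lemma: a value `2i+j ≥ 2^ℓ - 1` representable over `b < 2^ℓ` can be
decreased by `2^ℓ - 1` or `2^ℓ` staying representable. -/
lemma descent : ∀ ℓ b i j : ℕ, b < 2 ^ ℓ → le2 i b → le2 j (b - i) →
    2 ^ ℓ - 1 ≤ 2 * i + j →
    ∃ i' j' d : ℕ, le2 i' b ∧ le2 j' (b - i') ∧ d ≤ 1 ∧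
      2 * i' + j' + (2 ^ ℓ - 1) + d = 2 * i + j := by
  intro ℓ
  induction ℓ with
  | zero =>
    intro b i j hb hi hj _
    rw [pow_zero] at hb
    have hb0 : b = 0 := by omega
    have hi0 : i = 0 := by have := le2_le hi; omega
    have hj0 : j = 0 := by have := le2_le hj; omega
    exact ⟨0, 0, 0, le2_zero _, le2_zero _, by norm_num, by simp [hi0, hj0]⟩
  | succ ℓ IH =>
    intro b i j hb hi hj hv
    have hP2 : 2 ^ (ℓ + 1) = 2 * 2 ^ ℓ := by rw [pow_succ]; ring
    have hPpos : 0 < 2 ^ ℓ := Nat.two_pow_pos ℓ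
    have hib : i ≤ b := le2_le hi
    have hjbi : j ≤ b - i := le2_le hj
    by_cases hti : i.testBit ℓ = true
    · -- top digit of i is set: subtract 2^(ℓ+1) = 2·2^ℓ from 2i+j
      have hiP : 2 ^ ℓ ≤ i := Nat.ge_two_pow_of_testBit hti
      have hiP' : i - 2 ^ ℓ < 2 ^ ℓ := by omega
      have hbi : b - i < 2 ^ ℓ := by omega
      refine ⟨i - 2 ^ ℓ, j, 1, ?_, ?_, le_refl 1, by omega⟩
      · intro k hk
        have hkl : k < ℓ := testBit_true_lt hiP' hk
        apply hi k
        rw [← testBit_add_pow hiP' hkl] at hk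
        rwa [show i - 2 ^ ℓ + 2 ^ ℓ = i by omega] at hk
      · intro k hk
        have hjk := hj k hk
        have hkl : k < ℓ := testBit_true_lt hbi hjk
        rw [show b - (i - 2 ^ ℓ) = (b - i) + 2 ^ ℓ by omega]
        rw [testBit_add_pow hbi hkl]
        exact hjk
    · have hti' : i.testBit ℓ = false := by simpa using hti
      have hiP : i < 2 ^ ℓ := lt_pow_of_testBit_false (by omega) hti'
      by_cases htj : j.testBit ℓ = true
      · -- top digit of j is set
        have hjP : 2 ^ ℓ ≤ j := Nat.ge_two_pow_of_testBit htj
        have hbiP : 2 ^ ℓ ≤ b - i := Nat.ge_two_pow_of_testBit (hj ℓ htj)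
        have hbP : 2 ^ ℓ ≤ b := by omega
        have hb0 : b - 2 ^ ℓ < 2 ^ ℓ := by omega
        have hjPlt : j - 2 ^ ℓ < 2 ^ ℓ := by omega
        have hbiPlt : (b - i) - 2 ^ ℓ < 2 ^ ℓ := by omega
        have hi₀ : le2 i (b - 2 ^ ℓ) := by
          intro k hk
          have hkl : k < ℓ := testBit_true_lt hiP hk
          have := hi k hk
          rw [show b = (b - 2 ^ ℓ) + 2 ^ ℓ by omega, testBit_add_pow hb0 hkl] at this
          exact this
        have hj₀ : le2 (j - 2 ^ ℓ) (b - 2 ^ ℓ - i) := by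
          intro k hk
          have hkl : k < ℓ := testBit_true_lt hjPlt hk
          have hjk : j.testBit k = true := by
            rw [show j = (j - 2 ^ ℓ) + 2 ^ ℓ by omega, testBit_add_pow hjPlt hkl]
            exact hk
          have h1 := hj k hjk
          rw [show b - i = ((b - i) - 2 ^ ℓ) + 2 ^ ℓ by omega,
            testBit_add_pow hbiPlt hkl] at h1
          rw [show b - 2 ^ ℓ - i = (b - i) - 2 ^ ℓ by omega]
          exact h1
        obtain ⟨i₁, j₁, d, hi₁, hj₁, hd, heq⟩ :=
          IH (b - 2 ^ ℓ) i (j - 2 ^ ℓ) hb0 hi₀ hj₀ (by omega)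
        have hi₁P : i₁ < 2 ^ ℓ := lt_of_le_of_lt (le2_le hi₁) hb0
        have hbi₁ : b - 2 ^ ℓ - i₁ < 2 ^ ℓ := by omega
        have hi₁b : i₁ ≤ b - 2 ^ ℓ := le2_le hi₁
        refine ⟨i₁, j₁, d, ?_, ?_, hd, by omega⟩
        · intro k hk
          have hkl : k < ℓ := testBit_true_lt hi₁P hk
          have := hi₁ k hk
          rw [show b = (b - 2 ^ ℓ) + 2 ^ ℓ by omega, testBit_add_pow hb0 hkl]
          exact this
        · intro k hk
          have h1 := hj₁ k hk
          have hkl : k < ℓ := testBit_true_lt hbi₁ h1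
          rw [show b - i₁ = (b - 2 ^ ℓ - i₁) + 2 ^ ℓ by omega,
            testBit_add_pow hbi₁ hkl]
          exact h1
      · -- both top digits clear: impossible as 2i+j too large
        exfalso
        have htj' : j.testBit ℓ = false := by simpa using htj
        have hjP : j < 2 ^ ℓ := lt_pow_of_testBit_false (by omega) htj'
        have hjm : le2 j ((b - i) % 2 ^ ℓ) := by
          intro k hk
          have hkl : k < ℓ := testBit_true_lt hjP hk
          rw [testBit_mod_lt hkl]
          exact hj k hk
        have him : le2 i (b % 2 ^ ℓ) := by
          intro k hk
          have hkl : k < ℓ := testBit_true_lt hiP hk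
          rw [testBit_mod_lt hkl]
          exact hi k hk
        have h1 : i ≤ b % 2 ^ ℓ := le2_le him
        have h2 : j ≤ (b - i) % 2 ^ ℓ := le2_le hjm
        have h3 : (b - i) % 2 ^ ℓ = b % 2 ^ ℓ - i % 2 ^ ℓ := (sub_decomp ℓ hi).2
        have h4 : i % 2 ^ ℓ = i := Nat.mod_eq_of_lt hiP
        have h5 : b % 2 ^ ℓ < 2 ^ ℓ := Nat.mod_lt _ hPpos
        omega

/-- Reduce `t` to `0`, increasing `r'` by at most `t`. -/
lemma reduce (ℓ : ℕ) : ∀ t a b i j r' : ℕ, b ≤ 2 ^ ℓ - 1 → a ≤ 2 ^ ℓ - 1 →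
    le2 i b → le2 j (b - i) → 1 ≤ r' → r' + t ≤ 2 ^ ℓ →
    2 * i + j + a = 2 ^ ℓ - r' + t * (2 ^ ℓ - 1) →
    ∃ i' j' r'' : ℕ, le2 i' b ∧ le2 j' (b - i') ∧ 1 ≤ r'' ∧ r'' ≤ r' + t ∧
      2 * i' + j' + a = 2 ^ ℓ - r'' := by
  intro t
  induction t with
  | zero =>
    intro a b i j r' _ _ hi hj h1 h2 heq
    exact ⟨i, j, r', hi, hj, h1, by omega, by omega⟩
  | succ t IH =>
    intro a b i j r' hb ha hi hj h1 h2 heq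
    have hQpos : 1 ≤ 2 ^ ℓ := Nat.one_le_two_pow
    have hE : (t + 1) * (2 ^ ℓ - 1) = t * (2 ^ ℓ - 1) + (2 ^ ℓ - 1) := by ring
    by_cases hv : 2 ^ ℓ - 1 ≤ 2 * i + j
    · obtain ⟨i₁, j₁, d, hi₁, hj₁, hd, hdeq⟩ := descent ℓ b i j (by omega) hi hj hv
      have heq₁ : 2 * i₁ + j₁ + a = 2 ^ ℓ - (r' + d) + t * (2 ^ ℓ - 1) := by omega
      obtain ⟨i', j', r'', hi', hj', hr1, hr2, heq'⟩ :=
        IH a b i₁ j₁ (r' + d) hb ha hi₁ hj₁ (by omega) (by omega) heq₁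
      exact ⟨i', j', r'', hi', hj', hr1, by omega, heq'⟩
    · push_neg at hv
      have hib := le2_le hi
      have hij : i + j ≤ b := by have := le2_le hj; omega
      have ht0 : t = 0 := by
        by_contra hc
        have hEt : 2 ^ ℓ - 1 ≤ t * (2 ^ ℓ - 1) :=
          Nat.le_mul_of_pos_left _ (by omega)
        omega
      subst ht0
      refine ⟨0, 0, 2 ^ ℓ - a, le2_zero _, le2_zero _, by omega, by omega, by omega⟩

/-- Projection of `S_0(ℓ; ρ)` (with `ρ ≤ 2^s + 2`) to the high `ℓ - s` bits lands in
`S_0(ℓ - s; 3)`. -/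
lemma project (ℓ s ρ : ℕ) (hsl : s + 2 ≤ ℓ) (hρ : ρ ≤ 2 ^ s + 2) (a b : ℕ)
    (h : (a, b) ∈ Sset ℓ ρ 0) :
    (a / 2 ^ s, b / 2 ^ s) ∈ Sset (ℓ - s) 3 0 := by
  obtain ⟨ha, hb, i, j, r', hi, hj, hr1, hr2, heq⟩ := h
  obtain ⟨M, hM⟩ : ∃ M, M = 2 ^ (ℓ - s) := ⟨_, rfl⟩
  have hSpos : 0 < 2 ^ s := Nat.two_pow_pos s
  have hSm : 2 ^ s * M = 2 ^ ℓ := by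
    rw [hM, ← pow_add]
    congr 1
    omega
  have hmpos : 1 ≤ M := by rw [hM]; exact Nat.one_le_two_pow
  have hs4 : 2 ^ s + 2 ≤ 2 ^ ℓ := by
    have h1 : 2 ^ (s + 2) ≤ 2 ^ ℓ := Nat.pow_le_pow_right (by norm_num) hsl
    have h2 : 2 ^ (s + 2) = 4 * 2 ^ s := by ring
    omega
  have hrQ : r' ≤ 2 ^ ℓ := by omega
  -- shadow facts for low and high parts
  have hsub := sub_decomp s hi
  have hih : le2 (i / 2 ^ s) (b / 2 ^ s) := le2_div s hi
  have hjh : le2 (j / 2 ^ s) (b / 2 ^ s - i / 2 ^ s) := by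
    rw [← hsub.1]; exact le2_div s hj
  have hil : i % 2 ^ s ≤ b % 2 ^ s := le2_le (le2_mod s hi)
  have hjl : j % 2 ^ s ≤ b % 2 ^ s - i % 2 ^ s := by
    have := le2_le (le2_mod s hj)
    rwa [hsub.2] at this
  -- expand the equation
  have heq2 : 2 ^ s * (2 * (i / 2 ^ s) + j / 2 ^ s + a / 2 ^ s)
      + (2 * (i % 2 ^ s) + j % 2 ^ s + a % 2 ^ s) = 2 * i + j + a := by
    conv_rhs => rw [← Nat.div_add_mod i (2 ^ s), ← Nat.div_add_mod j (2 ^ s),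
      ← Nat.div_add_mod a (2 ^ s)]
    ring
  have heq3 : 2 ^ s * (2 * (i / 2 ^ s) + j / 2 ^ s + a / 2 ^ s)
      + (2 * (i % 2 ^ s) + j % 2 ^ s + a % 2 ^ s) + r' = 2 ^ s * M := by
    rw [heq2, hSm]
    omega
  have hXle : 2 * (i / 2 ^ s) + j / 2 ^ s + a / 2 ^ s ≤ M := by
    refine Nat.le_of_mul_le_mul_left ?_ hSpos
    omega
  obtain ⟨c, hc⟩ : ∃ c, c = M - (2 * (i / 2 ^ s) + j / 2 ^ s + a / 2 ^ s) :=
    ⟨_, rfl⟩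
  have hxc : 2 * (i / 2 ^ s) + j / 2 ^ s + a / 2 ^ s + c = M := by omega
  have hmulc : 2 ^ s * (2 * (i / 2 ^ s) + j / 2 ^ s + a / 2 ^ s) + 2 ^ s * c
      = 2 ^ s * M := by
    rw [← Nat.mul_add, hxc]
  have hLc : 2 * (i % 2 ^ s) + j % 2 ^ s + a % 2 ^ s + r' = 2 ^ s * c := by omega
  -- bounds on the low part
  have hilS : i % 2 ^ s < 2 ^ s := Nat.mod_lt _ hSpos
  have halS : a % 2 ^ s < 2 ^ s := Nat.mod_lt _ hSpos
  have hblS : b % 2 ^ s < 2 ^ s := Nat.mod_lt _ hSpos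
  have hc1 : 1 ≤ c := by
    rcases Nat.eq_zero_or_pos c with h0 | h1
    · rw [h0, Nat.mul_zero] at hLc; omega
    · exact h1
  have hc3 : c ≤ 3 := by
    by_contra hcc
    push_neg at hcc
    have h4 : 2 ^ s * 4 ≤ 2 ^ s * c := Nat.mul_le_mul_left (2 ^ s) (by omega)
    omega
  -- high-part bounds
  have hah : a / 2 ^ s < M := by
    rw [Nat.div_lt_iff_lt_mul hSpos]
    have h1 : a < 2 ^ ℓ := by omega
    have h2 : M * 2 ^ s = 2 ^ ℓ := by rw [mul_comm]; exact hSm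
    omega
  have hbh : b / 2 ^ s < M := by
    rw [Nat.div_lt_iff_lt_mul hSpos]
    have h1 : b < 2 ^ ℓ := by omega
    have h2 : M * 2 ^ s = 2 ^ ℓ := by rw [mul_comm]; exact hSm
    omega
  simp only [Sset, Set.mem_setOf_eq]
  rw [← hM]
  clear hM hSm heq3 hmulc hLc hs4 hrQ heq heq2 hc
  refine ⟨by omega, by omega, i / 2 ^ s, j / 2 ^ s, c, hih, hjh, hc1, hc3, ?_⟩
  rw [zero_add, one_mul]
  exact Nat.eq_sub_of_add_eq hxc

lemma sset_finite (ℓ r t : ℕ) : (Sset ℓ r t).Finite := by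
  apply Set.Finite.subset
    (Set.Finite.prod (Set.finite_Iic (2 ^ ℓ - 1)) (Set.finite_Iic (2 ^ ℓ - 1)))
  rintro ⟨a, b⟩ ⟨h1, h2, -⟩
  exact ⟨h1, h2⟩

lemma sstar_finite (ℓ r : ℕ) : (SstarSet ℓ r).Finite := by
  apply Set.Finite.subset
    (Set.Finite.prod (Set.finite_Iic (2 ^ ℓ - 1)) (Set.finite_Iic (2 ^ ℓ - 1)))
  rintro ⟨a, b⟩ ⟨h1, h2, -⟩
  exact ⟨h1, h2⟩

lemma sset_nonempty (m : ℕ) : ((2 ^ m - 1, 0) : ℕ × ℕ) ∈ Sset m 3 0 := by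
  have h1 : 1 ≤ 2 ^ m := Nat.one_le_two_pow
  exact ⟨le_refl _, Nat.zero_le _, 0, 0, 1, le2_zero _, le2_zero _, le_refl 1,
    by norm_num, by omega⟩

/-- Every element of `S*(ℓ; r)` projects (high bits) into `S_0(ℓ - s; 3)`. -/
lemma key_mem (ℓ s r : ℕ) (hs2 : s + 2 ≤ ℓ) (hrs : r ≤ 2 ^ s) (hrQ : 4 * r ≤ 2 ^ ℓ)
    (hr1 : 1 ≤ r) :
    ∀ p : ℕ × ℕ, p ∈ SstarSet ℓ r → (p.1 / 2 ^ s, p.2 / 2 ^ s) ∈ Sset (ℓ - s) 3 0 := by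
  rintro ⟨a, b⟩ ⟨ha, hb, i, j, t, r', hi, hj, h1, h2, heq⟩
  have hQ4 : 4 ≤ 2 ^ ℓ := by omega
  have hib : i ≤ b := le2_le hi
  have hij : i + j ≤ b := by have := le2_le hj; omega
  have ht2 : t ≤ 2 := by
    by_contra hc
    push_neg at hc
    have hE3 : 3 * (2 ^ ℓ - 1) ≤ t * (2 ^ ℓ - 1) :=
      Nat.mul_le_mul_right (2 ^ ℓ - 1) (by omega)
    omega
  obtain ⟨i', j', r'', hi', hj', hr1', hr2', heq'⟩ :=
    reduce ℓ t a b i j r' hb ha hi hj h1 (by omega) heq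
  have hmem : (a, b) ∈ Sset ℓ (r + 2) 0 :=
    ⟨ha, hb, i', j', r'', hi', hj', hr1', by omega, by omega⟩
  exact project ℓ s (r + 2) hs2 (by omega) a b hmem

/-- The counting step: `|S*(ℓ; r)| ≤ 2^s · 2^s · |S_0(ℓ-s; 3)|`. -/
lemma card_le (ℓ s r : ℕ) (hs2 : s + 2 ≤ ℓ) (hrs : r ≤ 2 ^ s) (hrQ : 4 * r ≤ 2 ^ ℓ)
    (hr1 : 1 ≤ r) :
    Nat.card ↥(SstarSet ℓ r) ≤ 2 ^ s * 2 ^ s * Nat.card ↥(Sset (ℓ - s) 3 0) := by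
  have hfin : (Sset (ℓ - s) 3 0).Finite := sset_finite _ _ _
  haveI := hfin.to_subtype
  have hSpos : 0 < 2 ^ s := Nat.two_pow_pos s
  set S := 2 ^ s with hSdef
  let f : ↥(SstarSet ℓ r) → ↥(Sset (ℓ - s) 3 0) × Fin S × Fin S := fun p =>
    (⟨(p.1.1 / S, p.1.2 / S), key_mem ℓ s r hs2 hrs hrQ hr1 p.1 p.2⟩,
      ⟨p.1.1 % S, Nat.mod_lt _ hSpos⟩, ⟨p.1.2 % S, Nat.mod_lt _ hSpos⟩)
  have hinj : Function.Injective f := by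
    rintro ⟨⟨a, b⟩, hp⟩ ⟨⟨a', b'⟩, hq⟩ h
    simp only [f, Prod.mk.injEq, Subtype.mk.injEq, Fin.mk.injEq] at h
    obtain ⟨⟨h1, h2⟩, h3, h4⟩ := h
    have ea : S * (a / S) + a % S = a := Nat.div_add_mod a S
    have ea' : S * (a' / S) + a' % S = a' := Nat.div_add_mod a' S
    have eb : S * (b / S) + b % S = b := Nat.div_add_mod b S
    have eb' : S * (b' / S) + b' % S = b' := Nat.div_add_mod b' S
    rw [h1] at ea
    rw [h2] at eb
    have haa : a = a' := by omega
    have hbb : b = b' := by omega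
    apply Subtype.ext
    simp [haa, hbb]
  calc Nat.card ↥(SstarSet ℓ r)
      ≤ Nat.card (↥(Sset (ℓ - s) 3 0) × Fin S × Fin S) :=
        Nat.card_le_card_of_injective f hinj
    _ = Nat.card ↥(Sset (ℓ - s) 3 0) * (S * S) := by
        rw [Nat.card_prod, Nat.card_prod]
        simp [Nat.card_eq_fintype_card]
    _ = S * S * Nat.card ↥(Sset (ℓ - s) 3 0) := by ring

end Stmt14

/-- With `s = ⌈log₂ r⌉`, `|S*(ℓ; r)| < 4r²·|S₀(ℓ−s; 3)|`; and if `r`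
is a power of two then `|S*(ℓ; r)| ≤ r²·|S₀(ℓ−s; 3)|`. -/
theorem stmt_14 (ℓ r : ℕ) (hℓ : 2 ≤ ℓ) (hr1 : 1 ≤ r) (hr4 : 4 * r ≤ 2 ^ ℓ) :
    Nat.card ↥(SstarSet ℓ r) <
        4 * r ^ 2 * Nat.card ↥(Sset (ℓ - Nat.clog 2 r) 3 0) ∧
      ((∃ m : ℕ, r = 2 ^ m) →
        Nat.card ↥(SstarSet ℓ r) ≤
          r ^ 2 * Nat.card ↥(Sset (ℓ - Nat.clog 2 r) 3 0)) := by
  set s := Nat.clog 2 r with hsdef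
  have hrS : r ≤ 2 ^ s := Nat.le_pow_clog (by norm_num) r
  have hS2r : 2 ^ s < 2 * r := by
    rcases eq_or_lt_of_le hr1 with h | h
    · have hs0 : s = 0 := by rw [hsdef, ← h, Nat.clog_one_right]
      rw [hs0]
      omega
    · have hs1 : 1 ≤ s := Nat.clog_pos (by norm_num) (by omega)
      have hlt : 2 ^ (s - 1) < r :=
        Nat.pow_pred_clog_lt_self (by norm_num) (by omega)
      have h2 : 2 ^ s = 2 * 2 ^ (s - 1) := by
        conv_lhs => rw [show s = (s - 1) + 1 by omega]
        rw [pow_succ']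
      omega
  have hs2ℓ : s + 2 ≤ ℓ := by
    have h1 : 2 ^ (s + 2) < 2 ^ (ℓ + 1) := by
      have ha : 2 ^ (s + 2) = 4 * 2 ^ s := by ring
      have hb : 2 ^ (ℓ + 1) = 2 * 2 ^ ℓ := by ring
      omega
    have := (Nat.pow_lt_pow_iff_right (by norm_num : 1 < 2)).mp h1
    omega
  have hfin : (Sset (ℓ - s) 3 0).Finite := Stmt14.sset_finite _ _ _
  haveI := hfin.to_subtype
  haveI : Nonempty ↥(Sset (ℓ - s) 3 0) := ⟨⟨_, Stmt14.sset_nonempty (ℓ - s)⟩⟩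
  have hN : 0 < Nat.card ↥(Sset (ℓ - s) 3 0) := Nat.card_pos
  have hmain := Stmt14.card_le ℓ s r hs2ℓ hrS hr4 hr1
  constructor
  · have h4 : 2 ^ s * 2 ^ s < 4 * r ^ 2 := by
      calc 2 ^ s * 2 ^ s < (2 * r) * (2 * r) :=
            mul_lt_mul'' hS2r hS2r (Nat.zero_le _) (Nat.zero_le _)
        _ = 4 * r ^ 2 := by ring
    calc Nat.card ↥(SstarSet ℓ r) ≤ 2 ^ s * 2 ^ s * Nat.card ↥(Sset (ℓ - s) 3 0) := hmain
      _ < 4 * r ^ 2 * Nat.card ↥(Sset (ℓ - s) 3 0) := by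
          exact Nat.mul_lt_mul_of_lt_of_le h4 (le_refl _) hN
  · rintro ⟨μ, rfl⟩
    have hs : s = μ := by rw [hsdef, Nat.clog_pow 2 μ (by norm_num)]
    have hpow : (2 ^ μ) ^ 2 = 2 ^ s * 2 ^ s := by rw [hs]; ring
    rw [hpow]
    exact hmain
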